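/- Let r = p·d, fix q ∈ ℂ with q ≠ 0, ξ := exp(2π√−1/p), x_0 := 1, and nonzero x_1, …, x_{d−1} ∈ ℂ, and define Q_{c·p+m} := x_c ξ^m for 0 ≤ c ≤ d−1 and 0 ≤ m ≤ p−1. Let Γ := {λ ∈ P_{n,r} : for all μ ∈ P_{n,r}, λ ∼_R μ implies μ = λ}. Then Γ is stable under the shifts: if λ ∈ Γ then λ[i] ∈ Γ for every i ∈ ℤ. -/
import Mathlib


noncomputable section

/-- An `r`-multipartition of `n`, encoded as a function `la : ℕ → ℕ → ℕ`, where
`la k i` is the `(i+1)`-st part of the `(k+1)`-st component `λ^{(k+1)}`: each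
component is weakly decreasing, the parts vanish from index `n` on, the components
with index `≥ r` vanish, and the total size is `n`. -/
def IsMultipartition (n r : ℕ) (la : ℕ → ℕ → ℕ) : Prop :=
  (∀ k, Antitone (la k)) ∧ (∀ k i, n ≤ i → la k i = 0) ∧
    (∀ k, r ≤ k → ∀ i, la k i = 0) ∧
    (∑ k ∈ Finset.range r, ∑ i ∈ Finset.range n, la k i) = n

/-- The index map underlying the shift `λ ↦ λ[i]`: the component with (0-based) index
`t = c·p + j` (`0 ≤ j < p`) of `λ[i]` is the component of `λ` with index
`c·p + ((j + i) mod p)`. -/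
def shiftIdx (p : ℕ) (i : ℤ) (t : ℕ) : ℕ :=
  p * (t / p) + ((((t % p : ℕ) : ℤ) + i) % (p : ℤ)).toNat

/-- `shift p i la` is `λ[i]`, cyclically shifting the `p` components within each block
of `p` consecutive components by `i`. -/
def shift (p : ℕ) (i : ℤ) (la : ℕ → ℕ → ℕ) : ℕ → ℕ → ℕ :=
  fun t => la (shiftIdx p i t)

/-- `𝔨_λ`: the minimal positive integer `m` with `λ[m] = λ`. -/
def kOf (p : ℕ) (la : ℕ → ℕ → ℕ) : ℕ :=
  sInf {m : ℕ | 0 < m ∧ shift p (m : ℤ) la = la}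

open Classical in
/-- The residue of the (0-based) cell in row `i`, column `j` of the `(k+1)`-st component,
with respect to the parameters `q` and `Q_0, …, Q_{r-1}`; it takes values in
`ℂ ⊔ (ℤ × ℂ)`. -/
def res (q : ℂ) (Q : ℕ → ℂ) (r : ℕ) (i j k : ℕ) : ℂ ⊕ (ℤ × ℂ) :=
  if q ≠ 1 ∧ Q k ≠ 0 then Sum.inl (q ^ ((j : ℤ) - (i : ℤ)) * Q k)
  else if q = 1 ∧ (∀ l < r, l ≠ k → Q l ≠ Q k) then Sum.inr ((j : ℤ) - (i : ℤ), Q k)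
  else Sum.inl (Q k)

/-- The number of cells of the diagram of `λ` whose residue is `a`.  A cell is a triple
`(k, i, j)` with `k < r`, `i < n` and `j < λ^{(k+1)}_{i+1}` (all 0-based). -/
def resCount (q : ℂ) (Q : ℕ → ℂ) (r n : ℕ) (la : ℕ → ℕ → ℕ) (a : ℂ ⊕ (ℤ × ℂ)) : ℕ :=
  Nat.card {c : ℕ × ℕ × ℕ // c.1 < r ∧ c.2.1 < n ∧ c.2.2 < la c.1 c.2.1 ∧
    res q Q r c.2.1 c.2.2 c.1 = a}

/-- The residue equivalence `λ ∼_R μ`: for every residue value the numbers of cells of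
`λ` and of `μ` with that residue agree. -/
def ResEquiv (q : ℂ) (Q : ℕ → ℂ) (r n : ℕ) (la mu : ℕ → ℕ → ℕ) : Prop :=
  ∀ a : ℂ ⊕ (ℤ × ℂ), resCount q Q r n la a = resCount q Q r n mu a

end

/- ======================= auxiliary development ======================= -/

section GammaShiftAux

private lemma aux_toNat_emod_lt {p : ℕ} (hp : 0 < p) (z : ℤ) : (z % (p : ℤ)).toNat < p := by
  have h0 : (0:ℤ) < (p:ℤ) := by exact_mod_cast hp
  have h1 := Int.emod_nonneg z h0.ne'
  have h2 := Int.emod_lt_of_pos z h0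
  omega

private lemma aux_toNat_emod_cast {p : ℕ} (hp : 0 < p) (z : ℤ) :
    (((z % (p:ℤ)).toNat : ℤ)) = z % (p:ℤ) := by
  have h0 : (0:ℤ) < (p:ℤ) := by exact_mod_cast hp
  exact Int.toNat_of_nonneg (Int.emod_nonneg z h0.ne')

private lemma aux_shiftIdx_comp {p : ℕ} (hp : 0 < p) (i i' : ℤ) (t : ℕ) :
    shiftIdx p i' (shiftIdx p i t) = shiftIdx p (i + i') t := by
  have hm' : ((((t % p : ℕ) : ℤ) + i) % (p : ℤ)).toNat < p := aux_toNat_emod_lt hp _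
  unfold shiftIdx
  rw [Nat.mul_add_div hp, Nat.div_eq_of_lt hm', add_zero, Nat.mul_add_mod,
    Nat.mod_eq_of_lt hm']
  congr 1
  rw [aux_toNat_emod_cast hp]
  rw [Int.emod_add_emod, add_assoc]

private lemma aux_shiftIdx_zero {p : ℕ} (hp : 0 < p) (t : ℕ) : shiftIdx p 0 t = t := by
  unfold shiftIdx
  have h1 : (((t % p : ℕ) : ℤ) + 0) % (p:ℤ) = ((t % p : ℕ) : ℤ) := by
    rw [add_zero]
    exact Int.emod_eq_of_lt (by positivity) (by exact_mod_cast Nat.mod_lt t hp)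
  rw [h1, Int.toNat_natCast]
  exact Nat.div_add_mod t p

private lemma aux_shiftIdx_inv {p : ℕ} (hp : 0 < p) (i : ℤ) (t : ℕ) :
    shiftIdx p (-i) (shiftIdx p i t) = t := by
  rw [aux_shiftIdx_comp hp, add_neg_cancel, aux_shiftIdx_zero hp]

private lemma aux_shiftIdx_inv' {p : ℕ} (hp : 0 < p) (i : ℤ) (t : ℕ) :
    shiftIdx p i (shiftIdx p (-i) t) = t := by
  rw [aux_shiftIdx_comp hp, neg_add_cancel, aux_shiftIdx_zero hp]

private lemma aux_shiftIdx_lt {p d : ℕ} (hp : 0 < p) (i : ℤ) (t : ℕ) (ht : t < p * d) :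
    shiftIdx p i t < p * d := by
  have hm' : ((((t % p : ℕ) : ℤ) + i) % (p : ℤ)).toNat < p := aux_toNat_emod_lt hp _
  have hdiv : t / p < d := Nat.div_lt_of_lt_mul ht
  have h2 : p * (t / p + 1) ≤ p * d := Nat.mul_le_mul_left p hdiv
  have h3 : p * (t / p + 1) = p * (t / p) + p := by ring
  unfold shiftIdx
  omega

private lemma aux_shiftIdx_ge {p d : ℕ} (hp : 0 < p) (i : ℤ) (t : ℕ) (ht : p * d ≤ t) :
    p * d ≤ shiftIdx p i t := by
  have hdiv : d ≤ t / p := Nat.le_div_iff_mul_le hp |>.mpr (by rwa [mul_comm] at ht)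
  have : p * d ≤ p * (t / p) := Nat.mul_le_mul_left p hdiv
  unfold shiftIdx
  omega

/-- The scaling map on residue values. -/
private def scaleRes (ζ : ℂ) : ℂ ⊕ (ℤ × ℂ) → ℂ ⊕ (ℤ × ℂ)
  | Sum.inl z => Sum.inl (ζ * z)
  | Sum.inr w => Sum.inr (w.1, ζ * w.2)

private lemma scaleRes_scaleRes (ζ η : ℂ) (a : ℂ ⊕ (ℤ × ℂ)) :
    scaleRes ζ (scaleRes η a) = scaleRes (ζ * η) a := by
  cases a <;> simp [scaleRes, mul_assoc]

private lemma scaleRes_one (a : ℂ ⊕ (ℤ × ℂ)) : scaleRes 1 a = a := by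
  cases a <;> simp [scaleRes]

private lemma scaleRes_inj {ζ : ℂ} (hζ : ζ ≠ 0) : Function.Injective (scaleRes ζ) := by
  intro a b h
  have := congrArg (scaleRes ζ⁻¹) h
  rwa [scaleRes_scaleRes, scaleRes_scaleRes, inv_mul_cancel₀ hζ, scaleRes_one,
    scaleRes_one] at this

private lemma aux_pow_mod {x : ℂ} {p : ℕ} (hx : x ^ p = 1) (a : ℕ) :
    x ^ (a % p) = x ^ a := by
  conv_rhs => rw [← Nat.div_add_mod a p]
  rw [pow_add, pow_mul, hx, one_pow, one_mul]

private lemma aux_xi_pow {p : ℕ} (hp : 0 < p) :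
    Complex.exp (2 * Real.pi * Complex.I / p) ^ p = 1 := by
  rw [← Complex.exp_nat_mul]
  have hpne : (p:ℂ) ≠ 0 := Nat.cast_ne_zero.mpr hp.ne'
  rw [mul_div_cancel₀ _ hpne]
  exact Complex.exp_two_pi_mul_I

/-- Under the hypothesis on `Q`, shifting the component index multiplies `Q` by
`ξ ^ (i % p)`. -/
private lemma aux_Q_shiftIdx {p d r : ℕ} (hp : 0 < p) (hr : r = p * d)
    (x : ℕ → ℂ) (Q : ℕ → ℂ)
    (hQ : ∀ c < d, ∀ m < p,
      Q (c * p + m) = x c * Complex.exp (2 * Real.pi * Complex.I / p) ^ m)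
    (i : ℤ) (t : ℕ) (ht : t < r) :
    Q (shiftIdx p i t) =
      Complex.exp (2 * Real.pi * Complex.I / p) ^ ((i % (p:ℤ)).toNat) * Q t := by
  set ξ := Complex.exp (2 * Real.pi * Complex.I / p) with hξ
  have hξp : ξ ^ p = 1 := aux_xi_pow hp
  set c := t / p with hc'
  set m := t % p with hm'def
  have hc : c < d := by
    rw [hr] at ht
    exact Nat.div_lt_of_lt_mul ht
  have hm : m < p := Nat.mod_lt t hp
  set k := (i % (p:ℤ)).toNat with hk
  set m' := ((((m:ℕ):ℤ) + i) % (p:ℤ)).toNat with hm'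
  have hm'lt : m' < p := aux_toNat_emod_lt hp _
  have hshift : shiftIdx p i t = c * p + m' := by
    unfold shiftIdx; rw [mul_comm]
  have hQ1 : Q (shiftIdx p i t) = x c * ξ ^ m' := by
    rw [hshift]; exact hQ c hc m' hm'lt
  have hQt : Q t = x c * ξ ^ m := by
    have h2 : c * p + m = t := by rw [mul_comm]; exact Nat.div_add_mod t p
    rw [← h2]; exact hQ c hc m hm
  have hm'eq : m' = (m + k) % p := by
    have h2 : ((m:ℤ) + i) % (p:ℤ) = ((m:ℤ) + (k:ℤ)) % (p:ℤ) := by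
      conv_lhs => rw [Int.add_emod]
      conv_rhs => rw [Int.add_emod]
      rw [hk, aux_toNat_emod_cast hp, Int.emod_emod_of_dvd _ dvd_rfl]
    rw [hm', h2, show ((m:ℤ) + (k:ℤ)) = ((m + k : ℕ) : ℤ) by push_cast; ring,
      ← Int.natCast_mod, Int.toNat_natCast]
  have hpow : ξ ^ m' = ξ ^ m * ξ ^ k := by
    rw [hm'eq, aux_pow_mod hξp, pow_add]
  rw [hQ1, hQt, hpow]
  ring

/-- Key pointwise lemma: residues transform by `scaleRes ζ` under a `Q`-scaling
bijection of the component indices. -/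
private lemma aux_res_sigma (q : ℂ) (Q : ℕ → ℂ) (r : ℕ) (σ τ : ℕ → ℕ)
    (hστ : ∀ t, τ (σ t) = t) (hτσ : ∀ t, σ (τ t) = t)
    (hσr : ∀ t, t < r → σ t < r) (hτr : ∀ t, t < r → τ t < r)
    (ζ : ℂ) (hζ : ζ ≠ 0) (hQσ : ∀ t, t < r → Q (σ t) = ζ * Q t)
    (t : ℕ) (ht : t < r) (a b : ℕ) :
    res q Q r a b (σ t) = scaleRes ζ (res q Q r a b t) := by
  have hcoll : (∀ l < r, l ≠ t → Q l ≠ Q t) ↔ (∀ l < r, l ≠ σ t → Q l ≠ Q (σ t)) := by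
    constructor
    · intro H l hl hne heq
      have hτl : τ l < r := hτr l hl
      have h1 : Q l = ζ * Q (τ l) := by
        have := hQσ (τ l) hτl; rwa [hτσ] at this
      have h2 : Q (τ l) = Q t := by
        rw [h1, hQσ t ht] at heq
        exact mul_left_cancel₀ hζ heq
      have h3 : τ l ≠ t := by
        intro h; apply hne; rw [← hτσ l, h]
      exact H (τ l) hτl h3 h2
    · intro H l hl hne heq
      have h1 : Q (σ l) = Q (σ t) := by rw [hQσ l hl, hQσ t ht, heq]
      have h2 : σ l ≠ σ t := by
        intro h; apply hne
        have := congrArg τ h; rwa [hστ, hστ] at this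
      exact H (σ l) (hσr l hl) h2 h1
  have hQs : Q (σ t) = ζ * Q t := hQσ t ht
  by_cases hq : q = 1
  · subst hq
    have hA : ¬((1:ℂ) ≠ 1 ∧ Q (σ t) ≠ 0) := by simp
    have hB : ¬((1:ℂ) ≠ 1 ∧ Q t ≠ 0) := by simp
    by_cases h0 : ∀ l < r, l ≠ t → Q l ≠ Q t
    · have hC : (1:ℂ) = 1 ∧ ∀ l < r, l ≠ σ t → Q l ≠ Q (σ t) := ⟨rfl, hcoll.mp h0⟩
      have hD : (1:ℂ) = 1 ∧ ∀ l < r, l ≠ t → Q l ≠ Q t := ⟨rfl, h0⟩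
      rw [res, res, if_neg hA, if_neg hB, if_pos hC, if_pos hD, hQs]
      rfl
    · have hC : ¬((1:ℂ) = 1 ∧ ∀ l < r, l ≠ σ t → Q l ≠ Q (σ t)) := by
        rw [not_and]; intro _; exact fun h => h0 (hcoll.mpr h)
      have hD : ¬((1:ℂ) = 1 ∧ ∀ l < r, l ≠ t → Q l ≠ Q t) := by
        rw [not_and]; intro _; exact h0
      rw [res, res, if_neg hA, if_neg hB, if_neg hC, if_neg hD, hQs]
      rfl
  · have hC : ¬(q = 1 ∧ ∀ l < r, l ≠ σ t → Q l ≠ Q (σ t)) := by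
      rw [not_and]; intro h; exact absurd h hq
    have hD : ¬(q = 1 ∧ ∀ l < r, l ≠ t → Q l ≠ Q t) := by
      rw [not_and]; intro h; exact absurd h hq
    by_cases h0 : Q t = 0
    · have h0' : Q (σ t) = 0 := by rw [hQs, h0, mul_zero]
      have hA : ¬(q ≠ 1 ∧ Q (σ t) ≠ 0) := by simp [h0']
      have hB : ¬(q ≠ 1 ∧ Q t ≠ 0) := by simp [h0]
      rw [res, res, if_neg hA, if_neg hB, if_neg hC, if_neg hD, hQs, h0]
      simp [scaleRes]
    · have h0' : Q (σ t) ≠ 0 := by rw [hQs]; exact mul_ne_zero hζ h0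
      rw [res, res, if_pos ⟨hq, h0'⟩, if_pos ⟨hq, h0⟩, hQs]
      simp only [scaleRes]
      congr 1
      ring

/-- `resCount` transforms accordingly. -/
private lemma aux_resCount_sigma (q : ℂ) (Q : ℕ → ℂ) (r n : ℕ) (la : ℕ → ℕ → ℕ)
    (σ τ : ℕ → ℕ)
    (hστ : ∀ t, τ (σ t) = t) (hτσ : ∀ t, σ (τ t) = t)
    (hσr : ∀ t, t < r → σ t < r) (hτr : ∀ t, t < r → τ t < r)
    (ζ : ℂ) (hζ : ζ ≠ 0) (hQσ : ∀ t, t < r → Q (σ t) = ζ * Q t)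
    (a : ℂ ⊕ (ℤ × ℂ)) :
    resCount q Q r n (fun t => la (σ t)) a = resCount q Q r n la (scaleRes ζ a) := by
  unfold resCount
  apply Nat.card_congr
  refine
    { toFun := fun c => ⟨(σ c.1.1, c.1.2.1, c.1.2.2), ?_, ?_, ?_, ?_⟩
      invFun := fun c => ⟨(τ c.1.1, c.1.2.1, c.1.2.2), ?_, ?_, ?_, ?_⟩
      left_inv := ?_
      right_inv := ?_ }
  · exact hσr _ c.2.1
  · exact c.2.2.1
  · exact c.2.2.2.1
  · rw [aux_res_sigma q Q r σ τ hστ hτσ hσr hτr ζ hζ hQσ _ c.2.1, c.2.2.2.2]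
  · exact hτr _ c.2.1
  · exact c.2.2.1
  · show c.1.2.2 < la (σ (τ c.1.1)) c.1.2.1
    rw [hτσ]; exact c.2.2.2.1
  · apply scaleRes_inj hζ
    have h1 := aux_res_sigma q Q r σ τ hστ hτσ hσr hτr ζ hζ hQσ (τ c.1.1)
      (hτr _ c.2.1) c.1.2.1 c.1.2.2
    rw [hτσ] at h1
    rw [← h1, c.2.2.2.2]
  · intro c
    apply Subtype.ext
    show (τ (σ c.1.1), c.1.2.1, c.1.2.2) = c.1
    rw [hστ]
  · intro c
    apply Subtype.ext
    show (σ (τ c.1.1), c.1.2.1, c.1.2.2) = c.1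
    rw [hτσ]

/-- Shifting preserves being a multipartition. -/
private lemma aux_shift_mp {n r p d : ℕ} (hp : 0 < p) (hr : r = p * d)
    (la : ℕ → ℕ → ℕ) (hla : IsMultipartition n r la) (i : ℤ) :
    IsMultipartition n r (shift p i la) := by
  obtain ⟨h1, h2, h3, h4⟩ := hla
  refine ⟨fun k => h1 _, fun k j hj => h2 _ _ hj, fun k hk j => ?_, ?_⟩
  · apply h3
    rw [hr] at hk ⊢
    exact aux_shiftIdx_ge hp i k hk
  · refine Eq.trans ?_ h4
    apply Finset.sum_nbij' (i := fun t => shiftIdx p i t) (j := fun t => shiftIdx p (-i) t)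
    · intro t htm
      simp only [Finset.mem_range] at htm ⊢
      rw [hr] at htm ⊢
      exact aux_shiftIdx_lt hp i t htm
    · intro t htm
      simp only [Finset.mem_range] at htm ⊢
      rw [hr] at htm ⊢
      exact aux_shiftIdx_lt hp (-i) t htm
    · intro t _
      exact aux_shiftIdx_inv hp i t
    · intro t _
      exact aux_shiftIdx_inv' hp i t
    · intro t _
      rfl

end GammaShiftAux

/-- with the parameters `q ≠ 0` and `Q_{c·p+m} = x_c ξ^m`
(`ξ = exp(2π√-1/p)`, `x_0 = 1`, `x_1, …, x_{d-1} ≠ 0`), the set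
`Γ = {λ ∈ P_{n,r} : λ ∼_R μ ⟹ μ = λ}` is stable under the shifts `λ ↦ λ[i]`. -/
theorem gamma_shift_stable
    (n r p d : ℕ) (hp : 0 < p) (hd : 0 < d) (hr : r = p * d)
    (q : ℂ) (hq : q ≠ 0)
    (x : ℕ → ℂ) (hx0 : x 0 = 1) (hx : ∀ c, 0 < c → c < d → x c ≠ 0)
    (Q : ℕ → ℂ)
    (hQ : ∀ c < d, ∀ m < p,
      Q (c * p + m) = x c * Complex.exp (2 * Real.pi * Complex.I / p) ^ m)
    (la : ℕ → ℕ → ℕ) (hla : IsMultipartition n r la)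
    (hGamma : ∀ mu : ℕ → ℕ → ℕ, IsMultipartition n r mu →
      ResEquiv q Q r n la mu → mu = la)
    (i : ℤ) :
    IsMultipartition n r (shift p i la) ∧
      ∀ mu : ℕ → ℕ → ℕ, IsMultipartition n r mu →
        ResEquiv q Q r n (shift p i la) mu → mu = shift p i la := by
  have hξ0 : Complex.exp (2 * Real.pi * Complex.I / p) ≠ 0 := Complex.exp_ne_zero _
  have key : ∀ (j : ℤ) (f : ℕ → ℕ → ℕ) (a : ℂ ⊕ (ℤ × ℂ)),
      resCount q Q r n (shift p j f) a
        = resCount q Q r n f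
            (scaleRes (Complex.exp (2 * Real.pi * Complex.I / p) ^ ((j % (p:ℤ)).toNat)) a) := by
    intro j f a
    exact aux_resCount_sigma q Q r n f (shiftIdx p j) (shiftIdx p (-j))
      (aux_shiftIdx_inv hp j) (aux_shiftIdx_inv' hp j)
      (fun t ht => by rw [hr] at ht ⊢; exact aux_shiftIdx_lt hp j t ht)
      (fun t ht => by rw [hr] at ht ⊢; exact aux_shiftIdx_lt hp (-j) t ht)
      _ (pow_ne_zero _ hξ0)
      (fun t ht => aux_Q_shiftIdx hp hr x Q hQ j t ht) a
  refine ⟨aux_shift_mp hp hr la hla i, ?_⟩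
  intro mu hmu hres
  set ζ : ℂ := Complex.exp (2 * Real.pi * Complex.I / p) ^ ((i % (p:ℤ)).toNat) with hζdef
  have hζ : ζ ≠ 0 := pow_ne_zero _ hξ0
  have hcomp : shift p i (shift p (-i) mu) = mu := by
    funext t
    show mu (shiftIdx p (-i) (shiftIdx p i t)) = mu t
    rw [aux_shiftIdx_inv hp]
  have hmu' : IsMultipartition n r (shift p (-i) mu) := aux_shift_mp hp hr mu hmu (-i)
  have hres' : ResEquiv q Q r n la (shift p (-i) mu) := by
    intro b
    have hsc : scaleRes ζ (scaleRes ζ⁻¹ b) = b := by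
      rw [scaleRes_scaleRes, mul_inv_cancel₀ hζ, scaleRes_one]
    calc resCount q Q r n la b
        = resCount q Q r n la (scaleRes ζ (scaleRes ζ⁻¹ b)) := by rw [hsc]
      _ = resCount q Q r n (shift p i la) (scaleRes ζ⁻¹ b) := (key i la _).symm
      _ = resCount q Q r n mu (scaleRes ζ⁻¹ b) := hres _
      _ = resCount q Q r n (shift p i (shift p (-i) mu)) (scaleRes ζ⁻¹ b) := by rw [hcomp]
      _ = resCount q Q r n (shift p (-i) mu) (scaleRes ζ (scaleRes ζ⁻¹ b)) := key i _ _
      _ = resCount q Q r n (shift p (-i) mu) b := by rw [hsc]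
  have hla' : shift p (-i) mu = la := hGamma _ hmu' hres'
  rw [← hla']
  exact hcomp.symm
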